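/- Let H₁ and H₂ be complex Hilbert spaces and let V, V' : H₁ → H₂ be isometries (V*∘V = 1 and V'*∘V' = 1). Define the bounded operator S on H₂ ⊕ H₂ by the block matrix S = [[1 − V∘V*, V∘V'*], [V'∘V*, 1 − V'∘V'*]]. Then S is a self-adjoint unitary (S* = S and S∘S = 1), and for every bounded operator T on H₁ one has S ∘ ((V∘T∘V*) ⊕ 0) ∘ S = 0 ⊕ (V'∘T∘V'*). -/

import Mathlib

noncomputable section
open ContinuousLinearMap

/-- The 2×2 block operator `[[A, B], [C, D]]` on the Hilbert-space direct sum `H ⊕ H`,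
realized as `WithLp 2 (H × H)`. -/
def blockOp {H : Type} [NormedAddCommGroup H] [InnerProductSpace ℂ H]
    (A B C D : H →L[ℂ] H) : WithLp 2 (H × H) →L[ℂ] WithLp 2 (H × H) :=
  ((WithLp.prodContinuousLinearEquiv 2 ℂ H H).symm.toContinuousLinearMap.comp
    (((A.comp (ContinuousLinearMap.fst ℂ H H) + B.comp (ContinuousLinearMap.snd ℂ H H)).prod
      (C.comp (ContinuousLinearMap.fst ℂ H H) +
        D.comp (ContinuousLinearMap.snd ℂ H H))))).comp
    (WithLp.prodContinuousLinearEquiv 2 ℂ H H).toContinuousLinearMap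

variable {H : Type} [NormedAddCommGroup H] [InnerProductSpace ℂ H]

lemma blockOp_apply (A B C D : H →L[ℂ] H) (x : WithLp 2 (H × H)) :
    blockOp A B C D x = (WithLp.equiv 2 (H × H)).symm
      (A ((WithLp.equiv 2 (H × H)) x).1 + B ((WithLp.equiv 2 (H × H)) x).2,
       C ((WithLp.equiv 2 (H × H)) x).1 + D ((WithLp.equiv 2 (H × H)) x).2) := rfl

lemma blockOp_comp (A B C D A' B' C' D' : H →L[ℂ] H) :
    (blockOp A B C D).comp (blockOp A' B' C' D') =
      blockOp (A.comp A' + B.comp C') (A.comp B' + B.comp D')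
        (C.comp A' + D.comp C') (C.comp B' + D.comp D') := by
  ext x
  simp only [blockOp_apply, ContinuousLinearMap.comp_apply, ContinuousLinearMap.add_apply,
    map_add, Equiv.apply_symm_apply]
  exact congrArg _ (Prod.ext (by abel) (by abel))

lemma blockOp_id : blockOp (ContinuousLinearMap.id ℂ H) 0 0 (ContinuousLinearMap.id ℂ H)
    = ContinuousLinearMap.id ℂ (WithLp 2 (H × H)) := by
  ext x
  simp only [blockOp_apply, ContinuousLinearMap.id_apply, ContinuousLinearMap.zero_apply,
    add_zero, zero_add]
  exact Equiv.symm_apply_apply _ x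

lemma blockOp_adjoint [CompleteSpace H] (A B C D : H →L[ℂ] H) :
    ContinuousLinearMap.adjoint (blockOp A B C D) =
      blockOp (adjoint A) (adjoint C) (adjoint B) (adjoint D) := by
  symm
  rw [ContinuousLinearMap.eq_adjoint_iff]
  intro x y
  simp only [blockOp_apply, WithLp.prod_inner_apply, inner_add_left, inner_add_right,
    ContinuousLinearMap.adjoint_inner_left]
  have e : ∀ a b : H, ((WithLp.equiv 2 (H × H)).symm (a, b)).ofLp.1 = a ∧
      ((WithLp.equiv 2 (H × H)).symm (a, b)).ofLp.2 = b := fun a b => ⟨rfl, rfl⟩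
  simp only [(e _ _).1, (e _ _).2, inner_add_left, inner_add_right,
    ContinuousLinearMap.adjoint_inner_left, Equiv.apply_symm_apply]
  have e2 : ∀ z : WithLp 2 (H × H), ((WithLp.equiv 2 (H × H)) z).1 = z.ofLp.1 ∧
      ((WithLp.equiv 2 (H × H)) z).2 = z.ofLp.2 := fun z => ⟨rfl, rfl⟩
  simp only [(e2 _).1, (e2 _).2]
  ring

set_option maxHeartbeats 2000000 in
/-- Given isometries `V, V' : H₁ → H₂`, the block operator
`S = [[1 − V V*, V V'*], [V' V*, 1 − V' V'*]]` is a self-adjoint unitary conjugating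
`(V T V*) ⊕ 0` to `0 ⊕ (V' T V'*)` for every bounded operator `T` on `H₁`. -/
theorem isometry_conjugation_rotation
    {H₁ H₂ : Type} [NormedAddCommGroup H₁] [InnerProductSpace ℂ H₁] [CompleteSpace H₁]
    [NormedAddCommGroup H₂] [InnerProductSpace ℂ H₂] [CompleteSpace H₂]
    (V V' : H₁ →L[ℂ] H₂)
    (hV : (ContinuousLinearMap.adjoint V).comp V = ContinuousLinearMap.id ℂ H₁)
    (hV' : (ContinuousLinearMap.adjoint V').comp V' = ContinuousLinearMap.id ℂ H₁) :
    let S := blockOp (ContinuousLinearMap.id ℂ H₂ - V.comp (ContinuousLinearMap.adjoint V))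
      (V.comp (ContinuousLinearMap.adjoint V'))
      (V'.comp (ContinuousLinearMap.adjoint V))
      (ContinuousLinearMap.id ℂ H₂ - V'.comp (ContinuousLinearMap.adjoint V'))
    ContinuousLinearMap.adjoint S = S ∧
    S.comp S = ContinuousLinearMap.id ℂ (WithLp 2 (H₂ × H₂)) ∧
    ∀ T : H₁ →L[ℂ] H₁,
      S.comp ((blockOp (V.comp (T.comp (ContinuousLinearMap.adjoint V))) 0 0 0).comp S) =
        blockOp 0 0 0 (V'.comp (T.comp (ContinuousLinearMap.adjoint V'))) := by
  intro S
  have hVx : ∀ x, adjoint V (V x) = x := fun x => by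
    simpa using ContinuousLinearMap.ext_iff.mp hV x
  have hV'x : ∀ x, adjoint V' (V' x) = x := fun x => by
    simpa using ContinuousLinearMap.ext_iff.mp hV' x
  unfold S
  refine ⟨?_, ?_, ?_⟩
  · rw [blockOp_adjoint]
    congr 1 <;>
      simp [map_sub, ContinuousLinearMap.adjoint_id, ContinuousLinearMap.adjoint_comp,
        ContinuousLinearMap.adjoint_adjoint]
  · rw [blockOp_comp, ← blockOp_id]
    congr 1 <;> ext x <;>
      simp [ContinuousLinearMap.comp_apply, ContinuousLinearMap.sub_apply, hVx, hV'x] <;>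
      abel
  · intro T
    rw [blockOp_comp, blockOp_comp]
    congr 1 <;> ext x <;>
      simp [ContinuousLinearMap.comp_apply, ContinuousLinearMap.sub_apply, hVx, hV'x] <;>
      abel
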